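/- arXiv:2206.08051 — 6 statements merged into one kernel-verified Lean document; each statement's English description precedes it below -/
import Mathlib

section
/- Let P be a finite set of m distinct generators in ℝⁿ, let f be the CVDE built on P with kernel K (all local volumes vol_p(C(p)) strictly positive and finite), and let ℙ_m = f dx. For any bounded measurable set E ⊆ ℝⁿ, one has | ℙ_m(E) − (1/m)·|P ∩ E| | ≤ 2R, where R = (1/m)·|{p ∈ P : C(p) ∩ ∂E ≠ ∅}| is the fraction of generators whose Voronoi cell intersects the topological boundary ∂E of E. -/
open MeasureTheory Metric Set Filter

noncomputable section

/-- The Voronoi cell of a generator `p` w.r.t. the finite set of generators `P`. -/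
def cell {n : ℕ} (P : Finset (EuclideanSpace ℝ (Fin n))) (p : EuclideanSpace ℝ (Fin n)) :
    Set (EuclideanSpace ℝ (Fin n)) :=
  {x | ∀ q ∈ P, dist x p ≤ dist x q}

/-- A choice of a nearest generator (the generator of the cell containing `x`;
uniquely determined off the cell boundaries). -/
noncomputable def nearest {n : ℕ} (P : Finset (EuclideanSpace ℝ (Fin n)))
    (x : EuclideanSpace ℝ (Fin n)) : EuclideanSpace ℝ (Fin n) :=
  if h : P.Nonempty then (P.exists_min_image (fun p => dist x p) h).choose else 0

/-- The Compactified Voronoi Density Estimator: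
`f(x) = K(p,x) / (|P| · vol_p(C(x)))` where `p` is the generator of `C(x)`. -/
noncomputable def cvde {n : ℕ} (P : Finset (EuclideanSpace ℝ (Fin n)))
    (K : EuclideanSpace ℝ (Fin n) → EuclideanSpace ℝ (Fin n) → ℝ)
    (x : EuclideanSpace ℝ (Fin n)) : ℝ :=
  K (nearest P x) x / (P.card * ∫ y in cell P (nearest P x), K (nearest P x) y)

lemma halfspace_eq {n : ℕ} (p q : EuclideanSpace ℝ (Fin n)) :
    {x : EuclideanSpace ℝ (Fin n) | dist x p ≤ dist x q}
      = {x | (inner ℝ x (q - p) : ℝ) ≤ (‖q‖^2 - ‖p‖^2)/2} := by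
  ext x
  simp only [Set.mem_setOf_eq, dist_eq_norm]
  have h1 : ‖x - p‖ ≤ ‖x - q‖ ↔ ‖x - p‖^2 ≤ ‖x - q‖^2 := by
    constructor
    · exact fun h => pow_le_pow_left₀ (norm_nonneg _) h 2
    · exact fun h => le_of_pow_le_pow_left₀ two_ne_zero (norm_nonneg _) h
  rw [h1, norm_sub_sq_real, norm_sub_sq_real, inner_sub_right]
  constructor <;> intro h <;> linarith

lemma cell_eq {n : ℕ} (P : Finset (EuclideanSpace ℝ (Fin n))) (p : EuclideanSpace ℝ (Fin n)) :
    cell P p = ⋂ q ∈ P, {x : EuclideanSpace ℝ (Fin n) | dist x p ≤ dist x q} := by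
  ext x; simp [cell]

lemma convex_cell {n : ℕ} (P : Finset (EuclideanSpace ℝ (Fin n)))
    (p : EuclideanSpace ℝ (Fin n)) : Convex ℝ (cell P p) := by
  rw [cell_eq]
  refine convex_iInter fun q => convex_iInter fun _ => ?_
  rw [halfspace_eq p q]
  exact convex_halfSpace_le
    ⟨fun a b => inner_add_left a b _, fun c a => real_inner_smul_left a _ c⟩ _

lemma closed_cell {n : ℕ} (P : Finset (EuclideanSpace ℝ (Fin n)))
    (p : EuclideanSpace ℝ (Fin n)) : IsClosed (cell P p) := by
  rw [cell_eq]
  exact isClosed_biInter fun q _ => isClosed_le (by fun_prop) (by fun_prop)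

lemma mem_cell_self {n : ℕ} (P : Finset (EuclideanSpace ℝ (Fin n)))
    (p : EuclideanSpace ℝ (Fin n)) : p ∈ cell P p := by
  intro q hq; simp [dist_self, dist_nonneg]

lemma bisector_null {n : ℕ} {p q : EuclideanSpace ℝ (Fin n)} (hpq : p ≠ q) :
    volume {x : EuclideanSpace ℝ (Fin n) | dist x p = dist x q} = 0 := by
  have h : {x : EuclideanSpace ℝ (Fin n) | dist x p = dist x q}
      = (AffineSubspace.perpBisector p q : Set (EuclideanSpace ℝ (Fin n))) := by
    ext x; simp [AffineSubspace.mem_perpBisector_iff_dist_eq]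
  rw [h]
  refine Measure.addHaar_affineSubspace _ _ fun htop => ?_
  have : p ∈ AffineSubspace.perpBisector p q := htop ▸ AffineSubspace.mem_top _ _ _
  rw [AffineSubspace.mem_perpBisector_iff_dist_eq, dist_self] at this
  exact hpq (dist_eq_zero.mp this.symm)

/-- The set of "tie" points, equidistant from two distinct generators. -/
def ties {n : ℕ} (P : Finset (EuclideanSpace ℝ (Fin n))) : Set (EuclideanSpace ℝ (Fin n)) :=
  ⋃ p ∈ P, ⋃ q ∈ P, ⋃ (_ : p ≠ q), {x | dist x p = dist x q}

lemma ties_null {n : ℕ} (P : Finset (EuclideanSpace ℝ (Fin n))) : volume (ties P) = 0 := by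
  refine (measure_biUnion_null_iff P.countable_toSet).mpr fun p _ => ?_
  refine (measure_biUnion_null_iff P.countable_toSet).mpr fun q _ => ?_
  exact measure_iUnion_null_iff.mpr fun hpq => bisector_null hpq

lemma ties_meas {n : ℕ} (P : Finset (EuclideanSpace ℝ (Fin n))) : MeasurableSet (ties P) := by
  refine MeasurableSet.biUnion P.countable_toSet fun p _ => ?_
  refine MeasurableSet.biUnion P.countable_toSet fun q _ => ?_
  exact MeasurableSet.iUnion fun _ =>
    (isClosed_eq (by fun_prop) (by fun_prop)).measurableSet

lemma nearest_spec {n : ℕ} {P : Finset (EuclideanSpace ℝ (Fin n))} (hP : P.Nonempty)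
    (x : EuclideanSpace ℝ (Fin n)) :
    nearest P x ∈ P ∧ ∀ q ∈ P, dist x (nearest P x) ≤ dist x q := by
  rw [nearest, dif_pos hP]
  exact (P.exists_min_image (fun p => dist x p) hP).choose_spec

lemma nearest_eq {n : ℕ} {P : Finset (EuclideanSpace ℝ (Fin n))} (hP : P.Nonempty)
    {p : EuclideanSpace ℝ (Fin n)} (hp : p ∈ P) {x : EuclideanSpace ℝ (Fin n)}
    (hx : x ∈ cell P p) (hxT : x ∉ ties P) : nearest P x = p := by
  by_contra hne
  obtain ⟨h1, h2⟩ := nearest_spec hP x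
  have h3 : dist x (nearest P x) = dist x p := le_antisymm (h2 p hp) (hx _ h1)
  exact hxT (by simp only [ties, mem_iUnion]; exact ⟨_, h1, p, hp, hne, h3⟩)

/-- `|ℙ_m(E) − (1/m)|P ∩ E|| ≤ 2R` where `R` is the fraction of generators
whose Voronoi cell intersects the topological boundary of `E`. -/
theorem cvde_boundary_residue_bound {n : ℕ}
    (P : Finset (EuclideanSpace ℝ (Fin n))) (hP : P.Nonempty)
    (K : EuclideanSpace ℝ (Fin n) → EuclideanSpace ℝ (Fin n) → ℝ)
    (hK0 : ∀ p x, 0 ≤ K p x)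
    (hKint : ∀ p, Integrable (K p) volume)
    (hvolpos : ∀ p ∈ P, 0 < ∫ y in cell P p, K p y)
    (E : Set (EuclideanSpace ℝ (Fin n))) (hE : MeasurableSet E)
    (hEbdd : Bornology.IsBounded E) :
    |(∫ x in E, cvde P K x) - ((P : Set (EuclideanSpace ℝ (Fin n))) ∩ E).ncard / P.card| ≤
      2 * (({p ∈ (P : Set (EuclideanSpace ℝ (Fin n))) |
        (cell P p ∩ frontier E).Nonempty}).ncard / P.card) := by
  classical
  set m : ℝ := (P.card : ℝ) with hm'
  have hm : (0:ℝ) < m := by rw [hm']; exact_mod_cast Finset.card_pos.mpr hP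
  set D : EuclideanSpace ℝ (Fin n) → Set (EuclideanSpace ℝ (Fin n)) :=
    fun p => cell P p \ ties P with hD
  have hDmeas : ∀ p, MeasurableSet (D p) :=
    fun p => (closed_cell P p).measurableSet.diff (ties_meas P)
  have hDsub : ∀ p, D p ⊆ cell P p := fun p => diff_subset
  -- the pieces E ∩ D p are measurable, disjoint, and cover E ∩ (ties P)ᶜ
  have hpm : ∀ p, MeasurableSet (E ∩ D p) := fun p => hE.inter (hDmeas p)
  have hDdisj : Set.Pairwise (↑P) (Function.onFun Disjoint fun p => E ∩ D p) := by
    intro p hp q hq hpq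
    rw [Function.onFun, Set.disjoint_left]
    rintro x ⟨_, hxp⟩ ⟨_, hxq⟩
    exact hpq ((nearest_eq hP (Finset.mem_coe.mp hp) hxp.1 hxp.2).symm.trans
      (nearest_eq hP (Finset.mem_coe.mp hq) hxq.1 hxq.2))
  have hcover : E ∩ (ties P)ᶜ = ⋃ p ∈ P, (E ∩ D p) := by
    ext x
    simp only [mem_inter_iff, mem_compl_iff, mem_iUnion, hD, mem_diff]
    constructor
    · rintro ⟨hxE, hxT⟩
      exact ⟨nearest P x, (nearest_spec hP x).1, hxE,
        (fun q hq => (nearest_spec hP x).2 q hq), hxT⟩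
    · rintro ⟨p, hp, hxE, _, hxT⟩; exact ⟨hxE, hxT⟩
  have hEae : E =ᵐ[volume] (E ∩ (ties P)ᶜ : Set (EuclideanSpace ℝ (Fin n))) := by
    rw [MeasureTheory.ae_eq_set]
    constructor
    · refine measure_mono_null (fun x hx => ?_) (ties_null P)
      rcases hx with ⟨hxE, hx2⟩
      by_contra h
      exact hx2 ⟨hxE, h⟩
    · rw [Set.diff_eq_empty.mpr Set.inter_subset_left, measure_empty]
  -- on each piece, cvde coincides with the fixed-generator density
  have hceq : ∀ p ∈ P, Set.EqOn (cvde P K)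
      (fun x => K p x / (m * ∫ y in cell P p, K p y)) (E ∩ D p) := by
    intro p hp x hx
    have h := nearest_eq hP hp hx.2.1 hx.2.2
    simp only [cvde, h, hm']
  have hint : ∀ p ∈ P, IntegrableOn (cvde P K) (E ∩ D p) volume := by
    intro p hp
    exact IntegrableOn.congr_fun ((hKint p).div_const _).integrableOn
      (hceq p hp).symm (hpm p)
  have hsplit : (∫ x in E, cvde P K x)
      = ∑ p ∈ P, (∫ x in E ∩ D p, K p x) / (m * ∫ y in cell P p, K p y) := by
    rw [setIntegral_congr_set hEae, hcover,
      integral_biUnion_finset P (fun p _ => hpm p) hDdisj (fun p hp => hint p hp)]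
    refine Finset.sum_congr rfl fun p hp => ?_
    rw [setIntegral_congr_fun (hpm p) (hceq p hp), integral_div]
  -- counting sets
  have hPE : (((P : Set (EuclideanSpace ℝ (Fin n))) ∩ E).ncard : ℝ)
      = ∑ p ∈ P, (if p ∈ E then (1:ℝ) else 0) := by
    rw [Finset.sum_boole]
    congr 1
    rw [← Set.ncard_coe_finset]
    congr 1
    ext x
    simp [Finset.mem_filter, and_comm]
  have hPB : (({p ∈ (P : Set (EuclideanSpace ℝ (Fin n))) |
        (cell P p ∩ frontier E).Nonempty}).ncard : ℝ)
      = ∑ p ∈ P, (if (cell P p ∩ frontier E).Nonempty then (1:ℝ) else 0) := by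
    rw [Finset.sum_boole]
    congr 1
    rw [← Set.ncard_coe_finset]
    congr 1
    ext x
    simp [Finset.mem_filter]
  rw [hsplit, hPE, hPB, Finset.sum_div, Finset.sum_div, ← Finset.sum_sub_distrib,
    Finset.mul_sum]
  refine le_trans (Finset.abs_sum_le_sum_abs _ _) (Finset.sum_le_sum fun p hp => ?_)
  -- termwise bounds
  set t : ℝ := (∫ x in E ∩ D p, K p x) / (m * ∫ y in cell P p, K p y) with ht
  have hVpos : 0 < ∫ y in cell P p, K p y := hvolpos p hp
  have htnn : 0 ≤ t := div_nonneg
    (setIntegral_nonneg (hpm p) fun x _ => hK0 p x) (le_of_lt (mul_pos hm hVpos))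
  have htle : t ≤ 1 / m := by
    have hnum : (∫ x in E ∩ D p, K p x) ≤ ∫ y in cell P p, K p y := by
      refine setIntegral_mono_set (hKint p).integrableOn
        (Eventually.of_forall fun x => hK0 p x) ?_
      exact HasSubset.Subset.eventuallyLE fun x hx => hx.2.1
    calc t ≤ (∫ y in cell P p, K p y) / (m * ∫ y in cell P p, K p y) := by
            rw [ht]; gcongr
      _ = 1 / m := by
            rw [mul_comm, ← div_div, div_self (ne_of_gt hVpos)]
  by_cases hb : (cell P p ∩ frontier E).Nonempty
  · -- boundary cell: crude bound
    rw [if_pos hb]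
    have h1 : (if p ∈ E then (1:ℝ) else 0) / m ≤ 1 / m := by
      gcongr
      split <;> norm_num
    have h2 : 0 ≤ (if p ∈ E then (1:ℝ) else 0) / m := by positivity
    rw [abs_le]
    constructor <;> nlinarith [one_div_pos.mpr hm]
  · -- cell misses the frontier: exact agreement
    rw [if_neg hb]
    rw [Set.not_nonempty_iff_eq_empty] at hb
    have hsub2 : cell P p ⊆ interior E ∪ (closure E)ᶜ := by
      intro x hx
      by_cases hxc : x ∈ closure E
      · by_cases hxi : x ∈ interior E
        · exact Or.inl hxi
        · exact absurd (Set.eq_empty_iff_forall_notMem.mp hb x)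
            (not_not_intro ⟨hx, hxc, hxi⟩)
      · exact Or.inr hxc
    have hdisj2 : Disjoint (interior E) ((closure E)ᶜ) :=
      disjoint_compl_right.mono_left interior_subset_closure
    rcases (convex_cell P p).isPreconnected.subset_or_subset isOpen_interior
        isClosed_closure.isOpen_compl hdisj2 hsub2 with hin | hout
    · -- cell inside E
      have hpE : p ∈ E := interior_subset (hin (mem_cell_self P p))
      have hED : E ∩ D p = D p :=
        Set.inter_eq_self_of_subset_right
          (fun x hx => interior_subset (hin (hx.1)))
      have hDae : D p =ᵐ[volume] cell P p :=
        (diff_ae_eq_self).mpr (measure_mono_null Set.inter_subset_right (ties_null P))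
      have : t = 1 / m := by
        rw [ht, hED, setIntegral_congr_set hDae, mul_comm, ← div_div,
          div_self (ne_of_gt hVpos)]
      rw [this, if_pos hpE, sub_self, abs_zero]
      positivity
    · -- cell outside closure E
      have hpE : p ∉ E := fun h => hout (mem_cell_self P p) (subset_closure h)
      have hED : E ∩ D p = ∅ := by
        rw [Set.eq_empty_iff_forall_notMem]
        rintro x ⟨hxE, hxD⟩
        exact hout (hxD.1) (subset_closure hxE)
      have : t = 0 := by rw [ht, hED]; simp
      rw [this, if_neg hpE, zero_div, sub_zero, abs_zero]
      positivity
end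
end

section
/- Let ρ ∈ L¹(ℝⁿ) be a probability density whose support is all of ℝⁿ (the measure ρ dx assigns positive mass to every nonempty open set), and let ∅ ≠ E ⊆ ℝⁿ be a bounded measurable set. Then there exists a bounded measurable set B ⊇ E such that, as m → ∞, the probability with respect to P sampled as m i.i.d. points from ρ dx that every Voronoi cell of P intersecting E is contained in B tends to 1. -/
open MeasureTheory Metric Set Filter

noncomputable section

lemma cell_subset_of_net {n : ℕ} (P : Finset (EuclideanSpace ℝ (Fin n)))
    (x₀ : EuclideanSpace ℝ (Fin n)) (R : ℝ) (hR : 0 < R)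
    (hnet : ∀ z ∈ closedBall x₀ (3*R), ∃ q ∈ P, dist z q ≤ R/2)
    {E : Set (EuclideanSpace ℝ (Fin n))} (hE : E ⊆ closedBall x₀ R)
    (p : EuclideanSpace ℝ (Fin n)) (hint : (cell P p ∩ E).Nonempty) :
    cell P p ⊆ closedBall x₀ (3*R) := by
  obtain ⟨x, hxc, hxE⟩ := hint
  have hxball : dist x x₀ ≤ R := hE hxE
  obtain ⟨q', hq'P, hq'⟩ := hnet x (by simp only [mem_closedBall]; linarith)
  have hxp : dist x p ≤ R/2 := (hxc q' hq'P).trans hq'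
  intro y hy
  simp only [mem_closedBall]
  by_contra hfar
  push_neg at hfar
  have hdtri : dist y x₀ ≤ dist y x + dist x x₀ := dist_triangle _ _ _
  set d := dist y x with hd
  have hdpos : 2*R < d := by linarith
  have hd0 : (0:ℝ) < d := by linarith
  set c : ℝ := 2*R/d with hc
  have hc1 : c < 1 := (div_lt_one hd0).mpr hdpos
  have hc0 : 0 ≤ c := by positivity
  set z := x + c • (y - x) with hz
  have hnorm : ‖y - x‖ = d := by rw [hd, dist_eq_norm]
  have hzx : dist z x = 2*R := by
    rw [dist_eq_norm, show z - x = c • (y - x) by rw [hz]; abel, norm_smul,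
      Real.norm_eq_abs, abs_of_nonneg hc0, hnorm, hc]
    field_simp
  have hyz : dist y z = d - 2*R := by
    rw [dist_eq_norm, show y - z = (1 - c) • (y - x) by rw [hz]; module, norm_smul,
      Real.norm_eq_abs, abs_of_nonneg (by linarith), hnorm, hc]
    field_simp
  have hzball : z ∈ closedBall x₀ (3*R) := by
    simp only [mem_closedBall]
    calc dist z x₀ ≤ dist z x + dist x x₀ := dist_triangle _ _ _
    _ ≤ 2*R + R := by linarith
    _ = 3*R := by ring
  obtain ⟨q, hqP, hq⟩ := hnet z hzball
  have h1 : dist y p ≤ dist y q := hy q hqP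
  have h2 : dist y q ≤ (d - 2*R) + R/2 := by
    calc dist y q ≤ dist y z + dist z q := dist_triangle _ _ _
    _ ≤ (d - 2*R) + R/2 := by linarith
  have h3 : d ≤ dist y p + dist x p := by
    calc d = dist y x := rfl
    _ ≤ dist y p + dist p x := dist_triangle _ _ _
    _ = dist y p + dist x p := by rw [dist_comm p x]
  linarith

/-- for a full-support density `ρ` and a nonempty bounded measurable set `E`,
there is a bounded measurable set `B ⊇ E` such that, with probability tending to `1` as the
number `m` of i.i.d. generators grows, every Voronoi cell intersecting `E` lies inside `B`. -/
theorem voronoi_cells_eventually_in_bounded_set {n : ℕ}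
    {Ω : Type*} [MeasurableSpace Ω] (Pr : Measure Ω) [IsProbabilityMeasure Pr]
    (ρ : EuclideanSpace ℝ (Fin n) → ℝ) (hρ0 : ∀ x, 0 ≤ ρ x) (hρint : Integrable ρ volume)
    (μ : Measure (EuclideanSpace ℝ (Fin n)))
    (hμ : μ = volume.withDensity fun x => ENNReal.ofReal (ρ x))
    (hμprob : IsProbabilityMeasure μ)
    (hsupp : ∀ U : Set (EuclideanSpace ℝ (Fin n)), IsOpen U → U.Nonempty → 0 < μ U)
    -- the i.i.d. samples
    (X : ℕ → Ω → EuclideanSpace ℝ (Fin n))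
    (hXmeas : ∀ i, Measurable (X i))
    (hXdist : ∀ i, Measure.map (X i) Pr = μ)
    (hXindep : ProbabilityTheory.iIndepFun X Pr)
    -- the generators: the first `m` samples
    (P : ℕ → Ω → Finset (EuclideanSpace ℝ (Fin n)))
    (hP : ∀ m ω, (P m ω : Set (EuclideanSpace ℝ (Fin n))) = (fun i => X i ω) '' Set.Iio m)
    (E : Set (EuclideanSpace ℝ (Fin n))) (hEne : E.Nonempty) (hEmeas : MeasurableSet E)
    (hEbdd : Bornology.IsBounded E) :
    ∃ B : Set (EuclideanSpace ℝ (Fin n)), E ⊆ B ∧ MeasurableSet B ∧ Bornology.IsBounded B ∧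
      Tendsto (fun m => Pr {ω | ∀ p ∈ P m ω,
          (cell (P m ω) p ∩ E).Nonempty → cell (P m ω) p ⊆ B})
        atTop (nhds 1) := by
  obtain ⟨x₀, hx₀E⟩ := hEne
  obtain ⟨R₀, hR₀⟩ := hEbdd.subset_closedBall x₀
  set R : ℝ := max R₀ 1 with hRdef
  have hR : (0:ℝ) < R := lt_of_lt_of_le one_pos (le_max_right _ _)
  have hER : E ⊆ closedBall x₀ R := hR₀.trans (closedBall_subset_closedBall (le_max_left _ _))
  obtain ⟨t, htfin, htsub⟩ :=
    Metric.totallyBounded_iff.mp (isCompact_closedBall x₀ (3*R)).totallyBounded (R/4)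
      (by positivity)
  set T := htfin.toFinset with hT
  refine ⟨closedBall x₀ (3*R),
    hER.trans (closedBall_subset_closedBall (by linarith)),
    measurableSet_closedBall, isBounded_closedBall, ?_⟩
  -- the good event
  set G : ℕ → Set Ω := fun m => ⋂ c ∈ T, ⋃ i ∈ Finset.range m, (X i) ⁻¹' (ball c (R/4))
    with hG
  have hGmeas : ∀ m, MeasurableSet (G m) := fun m =>
    MeasurableSet.biInter (Finset.countable_toSet T) fun c _ =>
      MeasurableSet.biUnion (Finset.range m).countable_toSet fun i _ =>
        (hXmeas i) measurableSet_ball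
  -- on the good event, all cells meeting E are inside the ball
  have hGsub : ∀ m, G m ⊆ {ω | ∀ p ∈ P m ω,
      (cell (P m ω) p ∩ E).Nonempty → cell (P m ω) p ⊆ closedBall x₀ (3*R)} := by
    intro m ω hω p hp hne
    refine cell_subset_of_net (P m ω) x₀ R hR ?_ hER p hne
    intro z hz
    obtain ⟨c, hct, hzc⟩ := mem_iUnion₂.mp (htsub hz)
    have hcT : c ∈ T := htfin.mem_toFinset.mpr hct
    have hω' : ω ∈ ⋃ i ∈ Finset.range m, (X i) ⁻¹' (ball c (R/4)) := by
      exact mem_iInter₂.mp hω c hcT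
    obtain ⟨i, him, hib⟩ := mem_iUnion₂.mp hω'
    have him' : i < m := Finset.mem_range.mp him
    refine ⟨X i ω, ?_, ?_⟩
    · apply Finset.mem_coe.mp
      rw [hP m ω]
      exact ⟨i, him', rfl⟩
    · have h1 : dist z c < R/4 := mem_ball.mp hzc
      have h2 : dist (X i ω) c < R/4 := mem_ball.mp hib
      calc dist z (X i ω) ≤ dist z c + dist c (X i ω) := dist_triangle _ _ _
      _ = dist z c + dist (X i ω) c := by rw [dist_comm c]
      _ ≤ R/2 := by linarith
  -- probability of the bad event for one ball center
  have hball : ∀ c : EuclideanSpace ℝ (Fin n), ∀ i : ℕ,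
      Pr ((X i) ⁻¹' (ball c (R/4))ᶜ) = 1 - μ (ball c (R/4)) := by
    intro c i
    rw [← Measure.map_apply (hXmeas i) measurableSet_ball.compl, hXdist i,
      prob_compl_eq_one_sub measurableSet_ball]
  have hprod : ∀ (c : EuclideanSpace ℝ (Fin n)) (m : ℕ),
      Pr (⋂ i ∈ Finset.range m, (X i) ⁻¹' (ball c (R/4))ᶜ)
        = (1 - μ (ball c (R/4)))^m := by
    intro c m
    rw [hXindep.meas_biInter (fun i _ => ⟨(ball c (R/4))ᶜ, measurableSet_ball.compl, rfl⟩)]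
    simp only [hball c]
    rw [Finset.prod_const, Finset.card_range]
  have hμball : ∀ c : EuclideanSpace ℝ (Fin n), 0 < μ (ball c (R/4)) := fun c =>
    hsupp _ isOpen_ball (Metric.nonempty_ball.mpr (by positivity))
  -- bound on the bad event
  have hbad : ∀ m : ℕ, Pr (G m)ᶜ ≤ ∑ c ∈ T, (1 - μ (ball c (R/4)))^m := by
    intro m
    have hsubc : (G m)ᶜ ⊆ ⋃ c ∈ T, ⋂ i ∈ Finset.range m, (X i) ⁻¹' (ball c (R/4))ᶜ := by
      intro ω hω
      simp only [hG, mem_compl_iff, mem_iInter, not_forall] at hω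
      obtain ⟨c, hcT, hc⟩ := hω
      refine mem_iUnion₂.mpr ⟨c, hcT, ?_⟩
      simp only [mem_iInter, mem_preimage, mem_compl_iff]
      intro i hi
      intro hball'
      exact hc (mem_iUnion₂.mpr ⟨i, hi, hball'⟩)
    calc Pr (G m)ᶜ ≤ Pr (⋃ c ∈ T, ⋂ i ∈ Finset.range m, (X i) ⁻¹' (ball c (R/4))ᶜ) :=
          measure_mono hsubc
    _ ≤ ∑ c ∈ T, Pr (⋂ i ∈ Finset.range m, (X i) ⁻¹' (ball c (R/4))ᶜ) :=
          measure_biUnion_finset_le T _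
    _ = ∑ c ∈ T, (1 - μ (ball c (R/4)))^m := by
          exact Finset.sum_congr rfl fun c _ => hprod c m
  -- the sum tends to 0
  have hsum0 : Tendsto (fun m => ∑ c ∈ T, (1 - μ (ball c (R/4)))^m) atTop (nhds 0) := by
    have : (0:ENNReal) = ∑ c ∈ T, 0 := by simp
    rw [this]
    refine tendsto_finset_sum T fun c _ => ?_
    refine ENNReal.tendsto_pow_atTop_nhds_zero_of_lt_one ?_
    exact ENNReal.sub_lt_self ENNReal.one_ne_top one_ne_zero (hμball c).ne'
  -- squeeze
  have hupper : ∀ m, Pr {ω | ∀ p ∈ P m ω,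
      (cell (P m ω) p ∩ E).Nonempty → cell (P m ω) p ⊆ closedBall x₀ (3*R)} ≤ 1 :=
    fun m => prob_le_one
  have hlower : ∀ m, 1 - ∑ c ∈ T, (1 - μ (ball c (R/4)))^m ≤
      Pr {ω | ∀ p ∈ P m ω,
      (cell (P m ω) p ∩ E).Nonempty → cell (P m ω) p ⊆ closedBall x₀ (3*R)} := by
    intro m
    have h1 : 1 - ∑ c ∈ T, (1 - μ (ball c (R/4)))^m ≤ 1 - Pr (G m)ᶜ :=
      tsub_le_tsub_left (hbad m) 1
    have h2 : 1 - Pr (G m)ᶜ ≤ Pr (G m) := by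
      rw [tsub_le_iff_right]
      rw [measure_add_measure_compl (hGmeas m), measure_univ]
    exact h1.trans (h2.trans (measure_mono (hGsub m)))
  have hlow : Tendsto (fun m => 1 - ∑ c ∈ T, (1 - μ (ball c (R/4)))^m) atTop (nhds 1) := by
    have := ((ENNReal.continuous_sub_left ENNReal.one_ne_top).continuousAt
      (x := (0:ENNReal))).tendsto.comp hsum0
    simpa [Function.comp_def] using this
  exact tendsto_of_tendsto_of_tendsto_of_le_of_le hlow tendsto_const_nhds hlower hupper
end
end

section
/- Let ρ ∈ L¹(ℝⁿ) be a probability density whose support is all of ℝⁿ (the measure ρ dx assigns positive mass to every nonempty open set), and let ∅ ≠ E ⊆ ℝⁿ be a bounded measurable set. For a finite generator set P, let D_E(P) = max{ diam C(p) : p ∈ P, C(p) ∩ E ≠ ∅ } be the maximum diameter of a Voronoi cell of P intersecting E. Then, viewing D_E as a random variable in P sampled as m i.i.d. points from ρ dx, D_E converges in probability to 0 as m → ∞: for every ε > 0, the probability that D_E > ε tends to 0. -/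
open MeasureTheory Metric Set Filter

noncomputable section

lemma cell_subset_ball {n : ℕ} {P : Finset (EuclideanSpace ℝ (Fin n))}
    {c x p : EuclideanSpace ℝ (Fin n)} {r δ : ℝ} (hδ : 0 < δ)
    (hdense : ∀ z ∈ closedBall c (r + 3 * δ), ∃ q ∈ P, dist z q ≤ δ)
    (hxc : x ∈ closedBall c r) (hx : x ∈ cell P p) :
    cell P p ⊆ closedBall x (3 * δ) := by
  have key : ∀ y, y ∈ cell P p → y ∈ closedBall c (r + 3 * δ) → dist y p ≤ δ := by
    intro y hy hyc
    obtain ⟨q, hq, hdq⟩ := hdense y hyc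
    exact le_trans (hy q hq) hdq
  have hxc' : x ∈ closedBall c (r + 3 * δ) := by
    rw [mem_closedBall] at hxc ⊢; linarith
  have hxp : dist x p ≤ δ := key x hx hxc'
  intro z hz
  rw [mem_closedBall]
  by_contra hcon
  push_neg at hcon
  have hdzx : (0:ℝ) < dist z x := lt_trans (by positivity) hcon
  set t : ℝ := 3 * δ / dist z x with ht
  have ht0 : 0 ≤ t := by positivity
  have ht1 : t ≤ 1 := by
    rw [ht, div_le_one hdzx]; linarith
  set z' := (1 - t) • x + t • z with hz'
  have hz'cell : z' ∈ cell P p :=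
    convex_cell P p hx hz (by linarith) ht0 (by ring)
  have hz'x : dist z' x = 3 * δ := by
    have h1 : z' - x = t • (z - x) := by rw [hz']; module
    rw [dist_eq_norm, h1, norm_smul, Real.norm_eq_abs, abs_of_nonneg ht0, ht,
      ← dist_eq_norm, dist_comm z x]
    rw [div_mul_cancel₀]
    rw [dist_comm]; exact hdzx.ne'
  have hz'c : z' ∈ closedBall c (r + 3 * δ) := by
    rw [mem_closedBall] at hxc ⊢
    calc dist z' c ≤ dist z' x + dist x c := dist_triangle _ _ _
      _ ≤ r + 3 * δ := by rw [hz'x]; linarith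
  have hz'p : dist z' p ≤ δ := key z' hz'cell hz'c
  have : dist z' x ≤ 2 * δ := by
    calc dist z' x ≤ dist z' p + dist p x := dist_triangle _ _ _
      _ ≤ 2 * δ := by rw [dist_comm p x]; linarith
  rw [hz'x] at this
  linarith

/-- `D_E(P)`: the maximum diameter of a Voronoi cell of `P` intersecting `E`
(valued in `ℝ≥0∞`, since cells may be unbounded). -/
noncomputable def maxCellDiam {n : ℕ} (P : Finset (EuclideanSpace ℝ (Fin n)))
    (E : Set (EuclideanSpace ℝ (Fin n))) : ENNReal :=
  ⨆ p ∈ P, ⨆ _ : (cell P p ∩ E).Nonempty, EMetric.diam (cell P p)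

lemma maxCellDiam_le {n : ℕ} {P : Finset (EuclideanSpace ℝ (Fin n))}
    {E : Set (EuclideanSpace ℝ (Fin n))} {c : EuclideanSpace ℝ (Fin n)} {r δ : ℝ} (hδ : 0 < δ)
    (hE : E ⊆ closedBall c r)
    (hdense : ∀ z ∈ closedBall c (r + 3 * δ), ∃ q ∈ P, dist z q ≤ δ) :
    maxCellDiam P E ≤ ENNReal.ofReal (6 * δ) := by
  refine iSup₂_le fun p hp => iSup_le fun h => ?_
  obtain ⟨x, hxcell, hxE⟩ := h
  have hsub := cell_subset_ball hδ hdense (hE hxE) hxcell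
  refine EMetric.diam_le fun a ha b hb => ?_
  rw [edist_dist]
  refine ENNReal.ofReal_le_ofReal ?_
  have h1 := mem_closedBall.mp (hsub ha)
  have h2 := mem_closedBall.mp (hsub hb)
  calc dist a b ≤ dist a x + dist x b := dist_triangle _ _ _
    _ ≤ 6 * δ := by rw [dist_comm x b]; linarith

/-- for a full-support density `ρ` and a nonempty bounded measurable set `E`,
the maximum diameter `D_E` of the Voronoi cells intersecting `E`, viewed as a random
variable in `m` i.i.d. generators, converges in probability to `0` as `m → ∞`. -/
theorem max_cell_diameter_tendsto_zero_in_probability {n : ℕ}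
    {Ω : Type*} [MeasurableSpace Ω] (Pr : Measure Ω) [IsProbabilityMeasure Pr]
    (ρ : EuclideanSpace ℝ (Fin n) → ℝ) (hρ0 : ∀ x, 0 ≤ ρ x) (hρint : Integrable ρ volume)
    (μ : Measure (EuclideanSpace ℝ (Fin n)))
    (hμ : μ = volume.withDensity fun x => ENNReal.ofReal (ρ x))
    (hμprob : IsProbabilityMeasure μ)
    (hsupp : ∀ U : Set (EuclideanSpace ℝ (Fin n)), IsOpen U → U.Nonempty → 0 < μ U)
    -- the i.i.d. samples
    (X : ℕ → Ω → EuclideanSpace ℝ (Fin n))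
    (hXmeas : ∀ i, Measurable (X i))
    (hXdist : ∀ i, Measure.map (X i) Pr = μ)
    (hXindep : ProbabilityTheory.iIndepFun X Pr)
    -- the generators: the first `m` samples
    (P : ℕ → Ω → Finset (EuclideanSpace ℝ (Fin n)))
    (hP : ∀ m ω, (P m ω : Set (EuclideanSpace ℝ (Fin n))) = (fun i => X i ω) '' Set.Iio m)
    (E : Set (EuclideanSpace ℝ (Fin n))) (hEne : E.Nonempty) (hEmeas : MeasurableSet E)
    (hEbdd : Bornology.IsBounded E) :
    ∀ ε : ℝ, 0 < ε →
      Tendsto (fun m => Pr {ω | ENNReal.ofReal ε < maxCellDiam (P m ω) E})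
        atTop (nhds 0) := by
  haveI := hμprob
  intro ε hε
  set δ : ℝ := ε / 7 with hδdef
  have hδ : 0 < δ := by positivity
  obtain ⟨x0, hx0⟩ := hEne
  obtain ⟨r, hr⟩ := hEbdd.subset_closedBall x0
  set R : ℝ := r + 3 * δ with hRdef
  -- a finite δ/2-net of the closed ball of radius R
  have hcover : closedBall x0 R ⊆ ⋃ y ∈ closedBall x0 R, ball y (δ / 2) := fun z hz =>
    Set.mem_biUnion hz (mem_ball_self (by positivity))
  obtain ⟨T, hTsub, hTfin, hTcov⟩ := (isCompact_closedBall x0 R).elim_finite_subcover_image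
    (fun y _ => isOpen_ball) hcover
  set B : EuclideanSpace ℝ (Fin n) → Set (EuclideanSpace ℝ (Fin n)) :=
    fun y => ball y (δ / 2) with hBdef
  have hBmeas : ∀ y, MeasurableSet (B y) := fun y => measurableSet_ball
  have hBpos : ∀ y, 0 < μ (B y) := fun y =>
    hsupp _ isOpen_ball ⟨y, mem_ball_self (by positivity)⟩
  set a : EuclideanSpace ℝ (Fin n) → ENNReal := fun y => μ (B y)ᶜ with hadef
  have ha1 : ∀ y, a y < 1 := by
    intro y
    rw [hadef]
    simp only
    rw [prob_compl_eq_one_sub (hBmeas y)]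
    exact ENNReal.sub_lt_self ENNReal.one_ne_top one_ne_zero (hBpos y).ne'
  set bad : ℕ → EuclideanSpace ℝ (Fin n) → Set Ω :=
    fun m y => ⋂ j ∈ Finset.range m, X j ⁻¹' (B y)ᶜ with hbaddef
  have hbadPr : ∀ m y, Pr (bad m y) = a y ^ m := by
    intro m y
    have hind := (ProbabilityTheory.iIndepFun_iff_measure_inter_preimage_eq_mul.mp hXindep)
      (Finset.range m) (sets := fun _ => (B y)ᶜ) (fun i _ => (hBmeas y).compl)
    rw [hbaddef]
    simp only
    rw [hind]
    have heach : ∀ j ∈ Finset.range m, Pr (X j ⁻¹' (B y)ᶜ) = a y := by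
      intro j _
      rw [hadef]
      simp only
      rw [← hXdist j, Measure.map_apply (hXmeas j) (hBmeas y).compl]
    rw [Finset.prod_congr rfl heach, Finset.prod_const, Finset.card_range]
  -- the inclusion into the union of the bad events
  have hincl : ∀ m, {ω | ENNReal.ofReal ε < maxCellDiam (P m ω) E} ⊆
      ⋃ y ∈ hTfin.toFinset, bad m y := by
    intro m ω hω
    by_contra hcon
    have hdense : ∀ z ∈ closedBall x0 R, ∃ q ∈ P m ω, dist z q ≤ δ := by
      intro z hz
      obtain ⟨y, hyT, hzy⟩ := Set.mem_iUnion₂.mp (hTcov hz)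
      have hnb : ω ∉ bad m y := fun hb =>
        hcon (Set.mem_biUnion (hTfin.mem_toFinset.mpr hyT) hb)
      rw [hbaddef] at hnb
      simp only [Set.mem_iInter, Finset.mem_range, Set.mem_preimage, Set.mem_compl_iff,
        not_forall, not_not] at hnb
      obtain ⟨j, hj, hjB⟩ := hnb
      refine ⟨X j ω, ?_, ?_⟩
      · have hmem : X j ω ∈ (P m ω : Set (EuclideanSpace ℝ (Fin n))) := by
          rw [hP m ω]; exact ⟨j, hj, rfl⟩
        exact_mod_cast hmem
      · have h1 : dist z y < δ / 2 := mem_ball.mp hzy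
        have h2 : dist (X j ω) y < δ / 2 := mem_ball.mp hjB
        calc dist z (X j ω) ≤ dist z y + dist y (X j ω) := dist_triangle _ _ _
          _ ≤ δ := by rw [dist_comm y (X j ω)]; linarith
    have hle : maxCellDiam (P m ω) E ≤ ENNReal.ofReal (6 * δ) :=
      maxCellDiam_le hδ hr hdense
    have hlt : ENNReal.ofReal ε < ENNReal.ofReal (6 * δ) := lt_of_lt_of_le hω hle
    rw [ENNReal.ofReal_lt_ofReal_iff (by positivity)] at hlt
    rw [hδdef] at hlt
    linarith
  have hbound : ∀ m, Pr {ω | ENNReal.ofReal ε < maxCellDiam (P m ω) E} ≤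
      ∑ y ∈ hTfin.toFinset, a y ^ m := by
    intro m
    refine (measure_mono (hincl m)).trans ?_
    refine (measure_biUnion_finset_le _ _).trans ?_
    exact le_of_eq (Finset.sum_congr rfl fun y _ => hbadPr m y)
  have hsum : Tendsto (fun m => ∑ y ∈ hTfin.toFinset, a y ^ m) atTop (nhds 0) := by
    have h := tendsto_finset_sum hTfin.toFinset
      (fun y _ => ENNReal.tendsto_pow_atTop_nhds_zero_of_lt_one (ha1 y))
    simpa using h
  exact tendsto_of_tendsto_of_tendsto_of_le_of_le tendsto_const_nhds hsum
    (fun m => zero_le) hbound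
end
end

section
/- There exist constants c₁, c₂ with 1 < c₁ < c₂ − 1 < 31 such that for every x ∈ ℝⁿ, every δ > 0, every open cone K ⊆ ℝⁿ with apex x of aperture π/12 (i.e. K = {y ∈ ℝⁿ : y ≠ x and the angle between y − x and some fixed unit axis vector v is less than π/24}), and all points p, q, z ∈ K, if ‖x − p‖ < δ, c₁δ ≤ ‖x − q‖ < c₂δ, and ‖x − z‖ ≥ 32δ, then ‖z − q‖ < ‖z − p‖. -/
open Metric Set Real InnerProductGeometry
open scoped RealInnerProductSpace

noncomputable section

/-- The open cone with apex `x`, unit axis direction `v` and half-angle `θ`: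
points `y ≠ x` such that the angle between `y − x` and `v` is strictly less than `θ`.
A cone of aperture `π/12` is a cone of half-angle `π/24`. -/
def openCone {n : ℕ} (x v : EuclideanSpace ℝ (Fin n)) (θ : ℝ) :
    Set (EuclideanSpace ℝ (Fin n)) :=
  {y | y ≠ x ∧ InnerProductGeometry.angle (y - x) v < θ}

variable {E : Type*} [NormedAddCommGroup E] [InnerProductSpace ℝ E]

lemma inner_ge_of_inner_axis (v u w : E) (hv : ‖v‖ = 1)
    (c : ℝ) (hc0 : 0 ≤ c) (hc1 : c ≤ 1)
    (hu : c * ‖u‖ ≤ ⟪u, v⟫) (hw : c * ‖w‖ ≤ ⟪w, v⟫) :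
    (2 * c ^ 2 - 1) * (‖u‖ * ‖w‖) ≤ ⟪u, w⟫ := by
  set a := ⟪u, v⟫ with ha
  set b := ⟪w, v⟫ with hb
  have hvv : ⟪v, v⟫ = 1 := by
    rw [real_inner_self_eq_norm_sq, hv]; norm_num
  have h1 : ⟪u - a • v, w - b • v⟫ = ⟪u, w⟫ - a * b := by
    rw [ha, hb, inner_sub_left, inner_sub_right, inner_sub_right, real_inner_smul_left,
      real_inner_smul_left, real_inner_smul_right, real_inner_smul_right, hvv,
      real_inner_comm v w]
    ring
  have h2 : ‖u - a • v‖ ^ 2 = ‖u‖ ^ 2 - a ^ 2 := by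
    rw [norm_sub_sq_real, real_inner_smul_right, ← ha, norm_smul, Real.norm_eq_abs, hv]
    rw [abs_of_nonneg (le_trans (by positivity) hu)]
    ring
  have h3 : ‖w - b • v‖ ^ 2 = ‖w‖ ^ 2 - b ^ 2 := by
    rw [norm_sub_sq_real, real_inner_smul_right, ← hb, norm_smul, Real.norm_eq_abs, hv]
    rw [abs_of_nonneg (le_trans (by positivity) hw)]
    ring
  have h4 : |⟪u - a • v, w - b • v⟫| ≤ ‖u - a • v‖ * ‖w - b • v‖ :=
    abs_real_inner_le_norm _ _
  have hun : (0:ℝ) ≤ ‖u‖ := norm_nonneg _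
  have hwn : (0:ℝ) ≤ ‖w‖ := norm_nonneg _
  have ha0 : 0 ≤ a := le_trans (by positivity) hu
  have hb0 : 0 ≤ b := le_trans (by positivity) hw
  have ha2 : c ^ 2 * ‖u‖ ^ 2 ≤ a ^ 2 := by nlinarith [mul_nonneg hc0 hun]
  have hb2 : c ^ 2 * ‖w‖ ^ 2 ≤ b ^ 2 := by nlinarith [mul_nonneg hc0 hwn]
  have hX : (0:ℝ) ≤ ‖u - a • v‖ := norm_nonneg _
  have hY : (0:ℝ) ≤ ‖w - b • v‖ := norm_nonneg _
  have hXY2 : (‖u - a • v‖ * ‖w - b • v‖) ^ 2 ≤ ((1 - c ^ 2) * (‖u‖ * ‖w‖)) ^ 2 := by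
    have e1 : ‖u - a • v‖ ^ 2 ≤ (1 - c ^ 2) * ‖u‖ ^ 2 := by nlinarith
    have e2 : ‖w - b • v‖ ^ 2 ≤ (1 - c ^ 2) * ‖w‖ ^ 2 := by nlinarith
    have p2 : (0:ℝ) ≤ ‖w - b • v‖ ^ 2 := by positivity
    calc (‖u - a • v‖ * ‖w - b • v‖) ^ 2 = ‖u - a • v‖ ^ 2 * ‖w - b • v‖ ^ 2 := by ring
      _ ≤ ((1 - c ^ 2) * ‖u‖ ^ 2) * ((1 - c ^ 2) * ‖w‖ ^ 2) :=
          mul_le_mul e1 e2 p2 (by nlinarith)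
      _ = ((1 - c ^ 2) * (‖u‖ * ‖w‖)) ^ 2 := by ring
  have hXY : ‖u - a • v‖ * ‖w - b • v‖ ≤ (1 - c ^ 2) * (‖u‖ * ‖w‖) := by
    have hT : (0:ℝ) ≤ (1 - c ^ 2) * (‖u‖ * ‖w‖) :=
      mul_nonneg (by nlinarith) (by positivity)
    exact le_of_pow_le_pow_left₀ two_ne_zero hT hXY2
  have hab : c ^ 2 * (‖u‖ * ‖w‖) ≤ a * b :=
    le_trans (le_of_eq (by ring)) (mul_le_mul hu hw (by positivity) ha0)
  have h5 : -(‖u - a • v‖ * ‖w - b • v‖) ≤ ⟪u - a • v, w - b • v⟫ :=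
    neg_le_of_abs_le h4 |>.trans_eq' rfl
  have expand : (2 * c ^ 2 - 1) * (‖u‖ * ‖w‖)
      = c ^ 2 * (‖u‖ * ‖w‖) - (1 - c ^ 2) * (‖u‖ * ‖w‖) := by ring
  linarith [h5, h1, hXY, hab, expand]

/-- there are constants `1 < c₁ < c₂ − 1 < 31` such that for every point `x`,
every `δ > 0`, every open cone `K` with apex `x` of aperture `π/12` and all `p, q, z ∈ K`:
if `‖x−p‖ < δ`, `c₁δ ≤ ‖x−q‖ < c₂δ` and `‖x−z‖ ≥ 32δ`, then `‖z−q‖ < ‖z−p‖`. -/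
theorem cone_geometry_lemma :
    ∃ c₁ c₂ : ℝ, 1 < c₁ ∧ c₁ < c₂ - 1 ∧ c₂ - 1 < 31 ∧
      ∀ (n : ℕ) (x v : EuclideanSpace ℝ (Fin n)), ‖v‖ = 1 →
        ∀ δ : ℝ, 0 < δ →
          ∀ p q z : EuclideanSpace ℝ (Fin n),
            p ∈ openCone x v (Real.pi / 24) →
            q ∈ openCone x v (Real.pi / 24) →
            z ∈ openCone x v (Real.pi / 24) →
            dist x p < δ →
            c₁ * δ ≤ dist x q → dist x q < c₂ * δ →
            32 * δ ≤ dist x z →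
            dist z q < dist z p := by
  refine ⟨2, 31, by norm_num, by norm_num, by norm_num, ?_⟩
  intro n x v hv δ hδ p q z hp hq hz hxp hq1 hq2 hxz
  have hπ := Real.pi_pos
  set c := Real.cos (π / 24) with hc
  have hc0 : 0 ≤ c := Real.cos_nonneg_of_mem_Icc ⟨by linarith, by linarith⟩
  have hc1 : c ≤ 1 := Real.cos_le_one _
  have key : ∀ y : EuclideanSpace ℝ (Fin n), y ∈ openCone x v (π / 24) →
      c * ‖y - x‖ ≤ ⟪y - x, v⟫ := by
    intro y hy
    obtain ⟨_, hang⟩ := hy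
    have hcc : c ≤ Real.cos (InnerProductGeometry.angle (y - x) v) :=
      le_of_lt (Real.cos_lt_cos_of_nonneg_of_le_pi
        (InnerProductGeometry.angle_nonneg _ _) (by linarith) hang)
    have hmul := InnerProductGeometry.cos_angle_mul_norm_mul_norm (y - x) v
    rw [hv, mul_one] at hmul
    calc c * ‖y - x‖ ≤ Real.cos (InnerProductGeometry.angle (y - x) v) * ‖y - x‖ :=
          mul_le_mul_of_nonneg_right hcc (norm_nonneg _)
      _ = ⟪y - x, v⟫ := hmul
  have hIn : (2 * c ^ 2 - 1) * (‖q - x‖ * ‖z - x‖) ≤ ⟪q - x, z - x⟫ :=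
    inner_ge_of_inner_axis v _ _ hv c hc0 hc1 (key q hq) (key z hz)
  -- 2c² − 1 = cos(π/12) > cos(π/6) = √3/2
  set s := Real.sqrt 3 with hsdef
  have hs3 : s ^ 2 = 3 := Real.sq_sqrt (by norm_num)
  have hs0 : 0 ≤ s := Real.sqrt_nonneg 3
  have hs17 : (1.7 : ℝ) ≤ s := by nlinarith
  have hcos12 : 2 * c ^ 2 - 1 = Real.cos (π / 12) := by
    rw [show π / 12 = 2 * (π / 24) by ring, Real.cos_two_mul]
  have hshalf : s / 2 ≤ 2 * c ^ 2 - 1 := by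
    rw [hcos12, ← Real.cos_pi_div_six]
    exact le_of_lt (Real.cos_lt_cos_of_nonneg_of_le_pi (by linarith) (by linarith)
      (by linarith))
  set B := ‖q - x‖ with hB
  set r := ‖z - x‖ with hr
  have hB0 : (0:ℝ) ≤ B := norm_nonneg _
  have hr0 : (0:ℝ) ≤ r := norm_nonneg _
  have hdq : dist x q = B := by rw [dist_comm, dist_eq_norm]
  have hdz : dist x z = r := by rw [dist_comm, dist_eq_norm]
  rw [hdq] at hq1 hq2
  rw [hdz] at hxz
  -- lower bound for dist z p
  have hzp : r - δ ≤ dist z p := by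
    have ht := dist_triangle z p x
    rw [show dist z x = r by rw [dist_eq_norm], dist_comm p x] at ht
    linarith
  -- upper bound for (dist z q)²
  have hzq2 : (dist z q) ^ 2 = r ^ 2 - 2 * ⟪z - x, q - x⟫ + B ^ 2 := by
    rw [dist_eq_norm, show z - q = (z - x) - (q - x) by abel, norm_sub_sq_real]
  have hIn' : (s / 2) * (B * r) ≤ ⟪z - x, q - x⟫ := by
    rw [real_inner_comm]
    refine le_trans ?_ hIn
    exact mul_le_mul_of_nonneg_right hshalf (by positivity)
  have h6 : (dist z q) ^ 2 < (r - δ) ^ 2 := by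
    have t1 : (0:ℝ) ≤ (r - 32 * δ) * (1.7 * B - 2 * δ) :=
      mul_nonneg (by linarith) (by linarith)
    have nn1 : (0:ℝ) ≤ (B - 2 * δ) * (31 * δ - B) :=
      mul_nonneg (by linarith) (by linarith)
    have t3 : (0:ℝ) ≤ (B - 2 * δ) * δ := mul_nonneg (by linarith) (by linarith)
    have t4 : ((1.7:ℝ)) * (B * r) ≤ (s / 2) * 2 * (B * r) := by
      have := mul_le_mul_of_nonneg_right (by linarith : (1.7:ℝ) ≤ s / 2 * 2)
        (mul_nonneg hB0 hr0)
      linarith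
    nlinarith [mul_pos hδ hδ, hzq2, hIn', t1, nn1, t3, t4]
  have h7 : dist z q < r - δ :=
    lt_of_pow_lt_pow_left₀ 2 (by linarith) h6
  linarith
end
end

section
/- There exist a finite collection of open cones K₁, …, K_N ⊆ ℝⁿ with apex 0 of aperture π/12 whose closures cover ℝⁿ, and a constant c > 0, such that for every finite set P ⊆ ℝⁿ of distinct generators and every p ∈ P, diam C(p) ≤ c · max_j R_{p,j}, where R_{p,j} = min{ ‖p − q‖ : q ∈ P ∩ (p + K_j) } is the distance from p to its closest neighbour among the generators lying in the translated cone p + K_j (with R_{p,j} = ∞ if P ∩ (p + K_j) = ∅, and the inequality read as trivially true when some R_{p,j} = ∞). -/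
open Metric Set
open scoped RealInnerProductSpace

noncomputable section

lemma mem_openCone_iff {n : ℕ} {v : EuclideanSpace ℝ (Fin n)} (hv : ‖v‖ = 1)
    {θ : ℝ} (hθ0 : 0 < θ) (hθpi : θ ≤ Real.pi) (y : EuclideanSpace ℝ (Fin n)) :
    y ∈ openCone 0 v θ ↔ Real.cos θ * ‖y‖ < ⟪y, v⟫ := by
  have hmemθ : θ ∈ Set.Icc 0 Real.pi := ⟨hθ0.le, hθpi⟩
  constructor
  · rintro ⟨hy0, hang⟩
    rw [sub_zero] at hang
    have hy0' : y ≠ 0 := by simpa [sub_eq_zero] using hy0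
    have hyn : (0:ℝ) < ‖y‖ := norm_pos_iff.2 hy0'
    have hmema : InnerProductGeometry.angle y v ∈ Set.Icc 0 Real.pi :=
      ⟨InnerProductGeometry.angle_nonneg y v, InnerProductGeometry.angle_le_pi y v⟩
    have hcos : Real.cos θ < Real.cos (InnerProductGeometry.angle y v) :=
      Real.strictAntiOn_cos hmema hmemθ hang
    rw [InnerProductGeometry.cos_angle, hv, mul_one] at hcos
    exact (lt_div_iff₀ hyn).1 hcos
  · intro h
    have hy0' : y ≠ 0 := by
      rintro rfl; simp at h
    have hyn : (0:ℝ) < ‖y‖ := norm_pos_iff.2 hy0'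
    refine ⟨by simpa [sub_eq_zero] using hy0', ?_⟩
    rw [sub_zero]
    have hmema : InnerProductGeometry.angle y v ∈ Set.Icc 0 Real.pi :=
      ⟨InnerProductGeometry.angle_nonneg y v, InnerProductGeometry.angle_le_pi y v⟩
    have hcos : Real.cos θ < Real.cos (InnerProductGeometry.angle y v) := by
      rw [InnerProductGeometry.cos_angle, hv, mul_one]
      exact (lt_div_iff₀ hyn).2 h
    exact (Real.strictAntiOn_cos.lt_iff_gt hmemθ hmema).1 hcos

set_option maxHeartbeats 1000000 in
lemma key_norm_le {E : Type*} [NormedAddCommGroup E] [InnerProductSpace ℝ E]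
    {v a b : E} (hv : ‖v‖ = 1) {c : ℝ} (hc1 : Real.sqrt 3 / 2 ≤ c) (hc2 : c ≤ 1)
    (ha : c * ‖a‖ ≤ ⟪a, v⟫) (hb : c * ‖b‖ ≤ ⟪b, v⟫) (hb0 : b ≠ 0)
    (hab : ‖a‖ ≤ ‖a - b‖) : ‖a‖ ≤ ‖b‖ := by
  have hc0 : (0:ℝ) ≤ c := le_trans (by positivity) hc1
  have hc3 : (3:ℝ)/4 ≤ c^2 := by
    nlinarith [Real.sq_sqrt (by norm_num : (0:ℝ) ≤ 3), Real.sqrt_nonneg 3]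
  set s := ⟪a, v⟫ with hs
  set t := ⟪b, v⟫ with ht
  have hna : (0:ℝ) ≤ ‖a‖ := norm_nonneg a
  have hnb : (0:ℝ) < ‖b‖ := norm_pos_iff.2 hb0
  have h1 : ‖a - s • v‖^2 = ‖a‖^2 - s^2 := by
    rw [norm_sub_sq_real, real_inner_smul_right, norm_smul, hv, mul_one,
      Real.norm_eq_abs, sq_abs, ← hs]; ring
  have h2 : ‖b - t • v‖^2 = ‖b‖^2 - t^2 := by
    rw [norm_sub_sq_real, real_inner_smul_right, norm_smul, hv, mul_one,
      Real.norm_eq_abs, sq_abs, ← ht]; ring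
  have h3 : ⟪a - s • v, b - t • v⟫ = ⟪a, b⟫ - s * t := by
    rw [inner_sub_left, inner_sub_right, inner_sub_right, real_inner_smul_left,
      real_inner_smul_left, real_inner_smul_right, real_inner_smul_right,
      real_inner_self_eq_norm_sq, hv, real_inner_comm b v, ← hs, ← ht]
    ring
  have hCS : -(‖a - s • v‖ * ‖b - t • v‖) ≤ ⟪a - s • v, b - t • v⟫ :=
    neg_le_of_abs_le (abs_real_inner_le_norm _ _)
  have hA : ‖a - s • v‖^2 ≤ (1 - c^2) * ‖a‖^2 := by
    rw [h1]; nlinarith [ha, mul_nonneg hc0 hna]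
  have hB : ‖b - t • v‖^2 ≤ (1 - c^2) * ‖b‖^2 := by
    rw [h2]; nlinarith [hb, mul_nonneg hc0 hnb.le]
  have hc2' : (0:ℝ) ≤ 1 - c^2 := by nlinarith
  have hprod : ‖a - s • v‖ * ‖b - t • v‖ ≤ (1 - c^2) * (‖a‖ * ‖b‖) := by
    have h4 : (‖a - s • v‖ * ‖b - t • v‖)^2 ≤ ((1 - c^2) * (‖a‖ * ‖b‖))^2 := by
      calc (‖a - s • v‖ * ‖b - t • v‖)^2 = ‖a - s • v‖^2 * ‖b - t • v‖^2 := by ring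
        _ ≤ ((1 - c^2) * ‖a‖^2) * ((1 - c^2) * ‖b‖^2) :=
            mul_le_mul hA hB (sq_nonneg _) (by positivity)
        _ = ((1 - c^2) * (‖a‖ * ‖b‖))^2 := by ring
    have hK : (0:ℝ) ≤ (1 - c^2) * (‖a‖ * ‖b‖) := by positivity
    have hx0 : (0:ℝ) ≤ ‖a - s • v‖ * ‖b - t • v‖ := by positivity
    calc ‖a - s • v‖ * ‖b - t • v‖ = Real.sqrt ((‖a - s • v‖ * ‖b - t • v‖)^2) :=
          (Real.sqrt_sq hx0).symm
      _ ≤ Real.sqrt (((1 - c^2) * (‖a‖ * ‖b‖))^2) := Real.sqrt_le_sqrt h4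
      _ = (1 - c^2) * (‖a‖ * ‖b‖) := Real.sqrt_sq hK
  have hst : c^2 * (‖a‖ * ‖b‖) ≤ s * t := by
    have h5 : (0:ℝ) ≤ c * ‖a‖ := mul_nonneg hc0 hna
    have h6 : (0:ℝ) ≤ c * ‖b‖ := mul_nonneg hc0 hnb.le
    nlinarith [mul_le_mul ha hb h6 (le_trans h5 ha)]
  have hinner : (2 * c^2 - 1) * (‖a‖ * ‖b‖) ≤ ⟪a, b⟫ := by
    linarith [hCS, h3, hprod, hst]
  have hsq : ‖a‖^2 ≤ ‖a - b‖^2 := pow_le_pow_left₀ hna hab 2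
  rw [norm_sub_sq_real] at hsq
  nlinarith [hinner, hsq, hnb, hc3, mul_nonneg hna hnb.le]

/-- there is a finite family of open cones with apex `0` of aperture `π/12`
whose closures cover `ℝⁿ` and a constant `c > 0` such that for every finite generator set
`P` and `p ∈ P`, `diam C(p) ≤ c · max_j R_{p,j}`, where `R_{p,j}` is the distance from `p`
to its closest neighbour among the generators in the translated cone `p + K_j`
(`R_{p,j} = ∞`, read as an infimum in `ℝ≥0∞` over an empty set, if there is none). -/
theorem diam_cell_le_cone_neighbor_distance {n : ℕ} (hn : 1 ≤ n) :
    ∃ (N : ℕ) (v : Fin N → EuclideanSpace ℝ (Fin n)) (c : ℝ),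
      (∀ j, ‖v j‖ = 1) ∧
      (⋃ j, closure (openCone 0 (v j) (Real.pi / 24))) = Set.univ ∧
      0 < c ∧
      ∀ (P : Finset (EuclideanSpace ℝ (Fin n))), ∀ p ∈ P,
        EMetric.diam (cell P p) ≤
          ENNReal.ofReal c *
            ⨆ j, ⨅ q ∈ (P : Set (EuclideanSpace ℝ (Fin n))) ∩
              {q | q - p ∈ openCone 0 (v j) (Real.pi / 24)}, edist p q := by
  classical
  set E := EuclideanSpace ℝ (Fin n)
  have hpi := Real.pi_pos
  set θ : ℝ := Real.pi / 24 with hθdef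
  have hθ0 : 0 < θ := by positivity
  have hθpi : θ ≤ Real.pi := by rw [hθdef]; linarith
  set c₀ : ℝ := Real.cos θ with hc₀def
  have hc₀pos : 0 < c₀ := Real.cos_pos_of_mem_Ioo ⟨by linarith, by rw [hθdef]; linarith⟩
  have hc₀lt1 : c₀ < 1 := by
    have := Real.strictAntiOn_cos (Set.mem_Icc.2 ⟨le_refl 0, hpi.le⟩)
      (Set.mem_Icc.2 ⟨hθ0.le, hθpi⟩) hθ0
    simpa using this
  have hc₀le1 : c₀ ≤ 1 := hc₀lt1.le
  have hc₀ge : Real.sqrt 3 / 2 ≤ c₀ := by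
    rw [hc₀def, ← Real.cos_pi_div_six]
    exact Real.cos_le_cos_of_nonneg_of_le_pi hθ0.le (by linarith) (by rw [hθdef]; linarith)
  set U : E → Set E := fun w => {y | c₀ * ‖y‖ < ⟪y, w⟫} with hUdef
  have hUopen : ∀ w : E, IsOpen (U w) :=
    fun w => isOpen_lt (continuous_const.mul continuous_norm)
      (continuous_id.inner continuous_const)
  have hscover : sphere (0:E) 1 ⊆ ⋃ w ∈ sphere (0:E) 1, U w := by
    intro u hu
    have hu1 : ‖u‖ = 1 := mem_sphere_zero_iff_norm.1 hu
    refine Set.mem_biUnion hu ?_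
    show c₀ * ‖u‖ < ⟪u, u⟫
    rw [real_inner_self_eq_norm_sq, hu1]
    simpa using hc₀lt1
  obtain ⟨t, hts, htfin, htcover⟩ :=
    (isCompact_sphere (0:E) 1).elim_finite_subcover_image (fun w _ => hUopen w) hscover
  set s : Finset E := htfin.toFinset with hsdef
  have hsmem : ∀ w ∈ s, ‖w‖ = 1 := by
    intro w hw
    exact mem_sphere_zero_iff_norm.1 (hts (htfin.mem_toFinset.1 hw))
  set N : ℕ := s.card with hNdef
  set e : {x // x ∈ s} ≃ Fin N := Fintype.equivFinOfCardEq (Fintype.card_coe s) with hedef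
  set v : Fin N → E := fun j => ((e.symm j : {x // x ∈ s}) : E) with hvdef
  have hv1 : ∀ j, ‖v j‖ = 1 := fun j => hsmem _ (e.symm j).2
  have hcover' : ∀ u : E, ‖u‖ = 1 → ∃ j, u ∈ U (v j) := by
    intro u hu
    obtain ⟨w, hw, huw⟩ := Set.mem_iUnion₂.1 (htcover (mem_sphere_zero_iff_norm.2 hu))
    refine ⟨e ⟨w, htfin.mem_toFinset.2 hw⟩, ?_⟩
    have : v (e ⟨w, htfin.mem_toFinset.2 hw⟩) = w := by
      simp only [hvdef, Equiv.symm_apply_apply]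
    rwa [this]
  -- homogeneity of membership in U
  have hhomog : ∀ (x : E) (j : Fin N), x ≠ 0 → ‖x‖⁻¹ • x ∈ U (v j) → x ∈ U (v j) := by
    intro x j hx hmem
    have hxn : (0:ℝ) < ‖x‖ := norm_pos_iff.2 hx
    have h1 : c₀ * ‖‖x‖⁻¹ • x‖ < ⟪‖x‖⁻¹ • x, v j⟫ := hmem
    rw [norm_smul, Real.norm_eq_abs, abs_inv, abs_of_pos hxn, inv_mul_cancel₀ hxn.ne',
      real_inner_smul_left] at h1
    show c₀ * ‖x‖ < ⟪x, v j⟫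
    have := mul_lt_mul_of_pos_left h1 hxn
    rw [mul_one] at this
    calc c₀ * ‖x‖ = ‖x‖ * c₀ := by ring
      _ < ‖x‖ * (‖x‖⁻¹ * ⟪x, v j⟫) := this
      _ = ⟪x, v j⟫ := by field_simp
  have hNpos : ∃ j : Fin N, True := by
    have hunit : ‖(EuclideanSpace.single (⟨0, hn⟩ : Fin n) (1:ℝ) : E)‖ = 1 := by
      rw [EuclideanSpace.norm_single]; norm_num
    obtain ⟨j, _⟩ := hcover' _ hunit
    exact ⟨j, trivial⟩
  refine ⟨N, v, 2, hv1, ?_, two_pos, ?_⟩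
  · -- closures cover
    apply Set.eq_univ_of_forall
    intro x
    by_cases hx : x = 0
    · obtain ⟨j, -⟩ := hNpos
      refine Set.mem_iUnion.2 ⟨j, ?_⟩
      subst hx
      have htend : Filter.Tendsto (fun k : ℕ => (1 / ((k:ℝ)+1)) • v j)
          Filter.atTop (nhds 0) := by
        have := (tendsto_one_div_add_atTop_nhds_zero_nat (𝕜 := ℝ)).smul_const (v j)
        simpa using this
      refine mem_closure_of_tendsto htend (Filter.Eventually.of_forall fun k => ?_)
      rw [mem_openCone_iff (hv1 j) hθ0 hθpi]
      have hε : (0:ℝ) < 1 / ((k:ℝ)+1) := by positivity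
      rw [real_inner_smul_left, real_inner_self_eq_norm_sq, hv1 j, norm_smul,
        Real.norm_eq_abs, abs_of_pos hε, hv1 j]
      nlinarith
    · have hxn : (0:ℝ) < ‖x‖ := norm_pos_iff.2 hx
      have hu1 : ‖‖x‖⁻¹ • x‖ = 1 := by
        rw [norm_smul, Real.norm_eq_abs, abs_inv, abs_of_pos hxn, inv_mul_cancel₀ hxn.ne']
      obtain ⟨j, hj⟩ := hcover' _ hu1
      refine Set.mem_iUnion.2 ⟨j, subset_closure ?_⟩
      rw [mem_openCone_iff (hv1 j) hθ0 hθpi]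
      exact hhomog x j hx hj
  · -- main estimate
    intro P p hp
    set R : ENNReal := ⨆ j, ⨅ q ∈ (P : Set E) ∩
        {q | q - p ∈ openCone 0 (v j) (Real.pi / 24)}, edist p q with hRdef
    have hkey : ∀ x ∈ cell P p, edist x p ≤ R := by
      intro x hx
      by_cases hxp : x = p
      · simp [hxp]
      · have hd : x - p ≠ 0 := sub_ne_zero.2 hxp
        have hdn : (0:ℝ) < ‖x - p‖ := norm_pos_iff.2 hd
        have hu1 : ‖‖x - p‖⁻¹ • (x - p)‖ = 1 := by
          rw [norm_smul, Real.norm_eq_abs, abs_inv, abs_of_pos hdn, inv_mul_cancel₀ hdn.ne']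
        obtain ⟨j, hj⟩ := hcover' _ hu1
        have hxU : c₀ * ‖x - p‖ < ⟪x - p, v j⟫ := hhomog _ j hd hj
        rw [hRdef]
        refine le_trans (le_iInf₂ fun q hq => ?_)
          (le_iSup (fun j => ⨅ q ∈ (P : Set E) ∩
            {q | q - p ∈ openCone 0 (v j) (Real.pi / 24)}, edist p q) j)
        obtain ⟨hqP, hqC⟩ := hq
        rw [Set.mem_setOf_eq, mem_openCone_iff (hv1 j) hθ0 hθpi] at hqC
        have hq0 : q - p ≠ 0 := by
          rintro h0
          rw [h0] at hqC
          simp at hqC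
        have hcell : dist x p ≤ dist x q := hx q hqP
        have hab : ‖x - p‖ ≤ ‖(x - p) - (q - p)‖ := by
          rw [sub_sub_sub_cancel_right]
          rw [dist_eq_norm, dist_eq_norm] at hcell
          exact hcell
        have hle : ‖x - p‖ ≤ ‖q - p‖ :=
          key_norm_le (hv1 j) hc₀ge hc₀le1 hxU.le hqC.le hq0 hab
        rw [edist_dist, edist_dist]
        apply ENNReal.ofReal_le_ofReal
        rw [dist_eq_norm, dist_eq_norm]
        rwa [← norm_sub_rev p q] at hle
    refine EMetric.diam_le fun x hx y hy => ?_
    calc edist x y ≤ edist x p + edist p y := edist_triangle x p y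
      _ = edist x p + edist y p := by rw [edist_comm p y]
      _ ≤ R + R := add_le_add (hkey x hx) (hkey y hy)
      _ = ENNReal.ofReal 2 * R := by rw [← two_mul, ENNReal.ofReal_ofNat]

end
end

section
/- Let P ⊆ ℝⁿ be a finite set of distinct generators, let z ∈ ℝⁿ be a point whose unique closest generator is p ∈ P (so z lies in C(p) and in no other cell), and let σ ∈ S^{n−1} be a unit vector. For q ∈ P \ {p} with ⟨σ, q − p⟩ ≠ 0, set l^q_z(σ) = (‖q − z‖² − ‖p − z‖²) / (2⟨σ, q − p⟩). Then the directional radius l_z(σ) = sup{ t ≥ 0 : z + tσ ∈ C(p) } satisfies: l_z(σ) = min{ l^q_z(σ) : q ∈ P \ {p}, ⟨σ, q − p⟩ ≠ 0, l^q_z(σ) ≥ 0 }, and l_z(σ) = ∞ if no q ∈ P \ {p} has ⟨σ, q − p⟩ ≠ 0 and l^q_z(σ) ≥ 0. -/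
open Metric Set
open scoped RealInnerProductSpace

noncomputable section

/-- The directional radius `l_z(σ) = sup{t ≥ 0 : z + tσ ∈ C(p)} ∈ [0,∞]`,
expressed in `ℝ≥0∞`. -/
noncomputable def dirRadius {n : ℕ} (P : Finset (EuclideanSpace ℝ (Fin n)))
    (p z σ : EuclideanSpace ℝ (Fin n)) : ENNReal :=
  ⨆ t ∈ {t : ℝ | 0 ≤ t ∧ z + t • σ ∈ cell P p}, ENNReal.ofReal t

/-- The quantity `l^q_z(σ) = (‖q−z‖² − ‖p−z‖²) / (2⟨σ, q−p⟩)`. -/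
noncomputable def lqz {n : ℕ} (p z σ q : EuclideanSpace ℝ (Fin n)) : ℝ :=
  (‖q - z‖ ^ 2 - ‖p - z‖ ^ 2) / (2 * ⟪σ, q - p⟫)

/-- for `z` with unique closest generator `p` and a unit vector `σ`, the
directional radius equals `min{ l^q_z(σ) : q ∈ P \ {p}, ⟨σ, q−p⟩ ≠ 0, l^q_z(σ) ≥ 0 }`;
the infimum in `ℝ≥0∞` over an empty index set is `∞`, which encodes the convention
`l_z(σ) = ∞` when no such `q` exists. -/
theorem dirRadius_eq_min_lqz {n : ℕ}
    (P : Finset (EuclideanSpace ℝ (Fin n))) (p : EuclideanSpace ℝ (Fin n)) (hp : p ∈ P)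
    (z : EuclideanSpace ℝ (Fin n)) (hz : ∀ q ∈ P, q ≠ p → dist z p < dist z q)
    (σ : EuclideanSpace ℝ (Fin n)) (hσ : ‖σ‖ = 1) :
    dirRadius P p z σ =
      ⨅ q ∈ {q ∈ (P : Set (EuclideanSpace ℝ (Fin n))) |
          q ≠ p ∧ ⟪σ, q - p⟫ ≠ 0 ∧ 0 ≤ lqz p z σ q},
        ENNReal.ofReal (lqz p z σ q) := by
  classical
  -- positivity of the numerator
  have hA : ∀ q ∈ P, q ≠ p → 0 < ‖q - z‖ ^ 2 - ‖p - z‖ ^ 2 := by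
    intro q hq hqp
    have h1 : ‖p - z‖ < ‖q - z‖ := by
      have := hz q hq hqp
      rwa [dist_eq_norm, dist_eq_norm, norm_sub_rev z p, norm_sub_rev z q] at this
    nlinarith [norm_nonneg (p - z), norm_nonneg (q - z)]
  -- membership in the cell as a system of linear inequalities in t
  have hsq : ∀ (t : ℝ) (w : EuclideanSpace ℝ (Fin n)),
      ‖z - w + t • σ‖ ^ 2 = ‖w - z‖ ^ 2 + 2 * t * ⟪σ, z - w⟫ + t ^ 2 := by
    intro t w
    rw [norm_add_sq_real, real_inner_smul_right, norm_smul, norm_sub_rev z w,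
      real_inner_comm]
    simp [hσ, mul_pow, sq_abs]
    ring
  have hmem : ∀ t : ℝ, (z + t • σ ∈ cell P p ↔
      ∀ q ∈ P, 2 * t * ⟪σ, q - p⟫ ≤ ‖q - z‖ ^ 2 - ‖p - z‖ ^ 2) := by
    intro t
    simp only [cell, Set.mem_setOf_eq]
    refine forall₂_congr fun q hq => ?_
    rw [dist_eq_norm, dist_eq_norm, add_sub_right_comm, add_sub_right_comm,
      ← pow_le_pow_iff_left₀ (norm_nonneg _) (norm_nonneg _) (two_ne_zero),
      hsq t p, hsq t q]
    have hid : ⟪σ, q - p⟫ = ⟪σ, z - p⟫ - ⟪σ, z - q⟫ := by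
      rw [inner_sub_right, inner_sub_right, inner_sub_right]; ring
    constructor
    · intro h; rw [hid]; nlinarith [h]
    · intro h; rw [hid] at h; nlinarith [h]
  -- B ≠ 0 together with 0 ≤ lqz forces B > 0
  have hBpos : ∀ q ∈ P, q ≠ p → ⟪σ, q - p⟫ ≠ 0 → 0 ≤ lqz p z σ q → 0 < ⟪σ, q - p⟫ := by
    intro q hq hqp hB hl
    rcases lt_trichotomy (⟪σ, q - p⟫ : ℝ) 0 with h | h | h
    · exfalso
      have hAq := hA q hq hqp
      have : lqz p z σ q < 0 := div_neg_of_pos_of_neg hAq (by linarith)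
      linarith
    · exact absurd h hB
    · exact h
  refine le_antisymm ?_ ?_
  · -- LHS ≤ RHS
    refine le_iInf₂ fun q hq => ?_
    obtain ⟨hqP, hqp, hB, hl⟩ : q ∈ (P : Set _) ∧ q ≠ p ∧ ⟪σ, q - p⟫ ≠ 0 ∧ 0 ≤ lqz p z σ q := by
      simpa [Set.mem_setOf_eq] using hq
    have hBp := hBpos q hqP hqp hB hl
    refine iSup₂_le fun t ht => ?_
    obtain ⟨ht0, htc⟩ := ht
    have h2 := (hmem t).mp htc q hqP
    have : t ≤ lqz p z σ q := by
      rw [lqz, le_div_iff₀ (by linarith : (0:ℝ) < 2 * ⟪σ, q - p⟫)]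
      linarith
    exact ENNReal.ofReal_le_ofReal this
  · -- RHS ≤ LHS
    by_cases hF : (P.filter fun q => q ≠ p ∧ 0 < ⟪σ, q - p⟫).Nonempty
    · obtain ⟨q0, hq0, hmin⟩ := Finset.exists_min_image _ (lqz p z σ) hF
      rw [Finset.mem_filter] at hq0
      obtain ⟨hq0P, hq0p, hq0B⟩ := hq0
      set m := lqz p z σ q0 with hm
      have hAq0 := hA q0 hq0P hq0p
      have hm0 : 0 < m := div_pos hAq0 (by linarith)
      have hmS : (0:ℝ) ≤ m ∧ z + m • σ ∈ cell P p := by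
        refine ⟨hm0.le, (hmem m).mpr fun q hq => ?_⟩
        by_cases hqp : q = p
        · simp [hqp]
        · by_cases hB : 0 < ⟪σ, q - p⟫
          · have hle : m ≤ lqz p z σ q := hmin q (Finset.mem_filter.mpr ⟨hq, hqp, hB⟩)
            rw [lqz, le_div_iff₀ (by linarith : (0:ℝ) < 2 * ⟪σ, q - p⟫)] at hle
            linarith
          · push_neg at hB
            have hAq := hA q hq hqp
            nlinarith
      have h1 : ENNReal.ofReal m ≤ dirRadius P p z σ := by
        exact le_iSup₂ (f := fun t (_ : t ∈ {t : ℝ | 0 ≤ t ∧ z + t • σ ∈ cell P p}) =>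
          ENNReal.ofReal t) m hmS
      refine le_trans (iInf₂_le q0 ?_) h1
      refine ⟨hq0P, hq0p, ne_of_gt hq0B, hm0.le⟩
    · -- no constraining generator: LHS = ⊤
      have hall : ∀ t : ℝ, 0 ≤ t → z + t • σ ∈ cell P p := by
        intro t ht
        refine (hmem t).mpr fun q hq => ?_
        by_cases hqp : q = p
        · simp [hqp]
        · have hB : ¬ (0 < ⟪σ, q - p⟫) := fun h =>
            hF ⟨q, Finset.mem_filter.mpr ⟨hq, hqp, h⟩⟩
          push_neg at hB
          have hAq := hA q hq hqp
          nlinarith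
      have htop : dirRadius P p z σ = ⊤ := by
        refine top_unique ?_
        rw [← ENNReal.iSup_natCast]
        refine iSup_le fun k => ?_
        rw [← ENNReal.ofReal_natCast]
        exact le_iSup₂ (f := fun t (_ : t ∈ {t : ℝ | 0 ≤ t ∧ z + t • σ ∈ cell P p}) =>
          ENNReal.ofReal t) (k : ℝ) ⟨Nat.cast_nonneg k, hall _ (Nat.cast_nonneg k)⟩
      rw [htop]
      exact le_top
end
end
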